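/- Let α > 0 and let S be a tempered distribution on ℝˡ whose support is contained in the sphere {x ∈ ℝˡ : |x| = α}, i.e. ⟨S, φ⟩ = 0 for every Schwartz function φ whose support is disjoint from this sphere. Then there exists a nonnegative integer N such that (|x|² − α²)^{N+1} · S = 0, i.e. ⟨S, (|x|² − α²)^{N+1} φ(x)⟩ = 0 for every Schwartz function φ on ℝˡ. -/

import Mathlib

open MeasureTheory SchwartzMap Metric Set Function Filter Topology
open scoped ContDiff NNReal

section Aux

variable {E : Type*} [NormedAddCommGroup E] [NormedSpace ℝ E]

theorem myIteratedFDeriv_eq_zero {F' : Type*} [NormedAddCommGroup F'] [NormedSpace ℝ F']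
    {f : E → F'} {x : E} (h : ∀ᶠ y in 𝓝 x, f y = 0) (n : ℕ) :
    iteratedFDeriv ℝ n f x = 0 := by
  have h0 : f =ᶠ[𝓝 x] (fun _ => (0 : F')) := h
  have h1 : f =ᶠ[𝓝[Set.univ] x] (fun _ => (0 : F')) := by
    rw [nhdsWithin_univ]; exact h0
  have h2 := Filter.EventuallyEq.iteratedFDerivWithin_eq (𝕜 := ℝ) h1 (h0.self_of_nhds) n
  rw [iteratedFDerivWithin_univ, iteratedFDerivWithin_univ] at h2
  rw [h2, iteratedFDeriv_zero_fun]; rfl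

theorem myBounded {f : E → ℂ} (hsm : ContDiff ℝ ∞ f) (hcs : HasCompactSupport f)
    (k n : ℕ) : ∃ C : ℝ, ∀ x, ‖x‖ ^ k * ‖iteratedFDeriv ℝ n f x‖ ≤ C := by
  have hco : Continuous (iteratedFDeriv ℝ n f) :=
    hsm.continuous_iteratedFDeriv (mod_cast le_top)
  have h1 : Continuous fun x => ‖x‖ ^ k * ‖iteratedFDeriv ℝ n f x‖ :=
    (continuous_norm.pow k).mul hco.norm
  have h2 : HasCompactSupport fun x => ‖x‖ ^ k * ‖iteratedFDeriv ℝ n f x‖ := by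
    apply (hcs.iteratedFDeriv (𝕜 := ℝ) n).mono
    intro x hx
    simp only [Function.mem_support, ne_eq] at hx ⊢
    intro h0
    exact hx (by simp [h0])
  obtain ⟨C, hC⟩ := h1.bounded_above_of_compact_support h2
  refine ⟨C, fun x => ?_⟩
  have h3 := hC x
  rw [Real.norm_eq_abs] at h3
  exact (le_abs_self _).trans h3

/-- smooth compactly supported functions are Schwartz -/
noncomputable def ofCompactSmooth (f : E → ℂ) (hsm : ContDiff ℝ ∞ f)
    (hcs : HasCompactSupport f) : 𝓢(E, ℂ) :=
  ⟨f, hsm, fun k n => myBounded hsm hcs k n⟩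

@[simp] theorem ofCompactSmooth_apply (f : E → ℂ) (hsm : ContDiff ℝ ∞ f)
    (hcs : HasCompactSupport f) (x : E) : ofCompactSmooth f hsm hcs x = f x := rfl

theorem norm_iteratedFDeriv_id_le (j : ℕ) (x : E) :
    ‖iteratedFDeriv ℝ j (fun y : E => y) x‖ ≤ max 1 ‖x‖ := by
  match j with
  | 0 => rw [norm_iteratedFDeriv_zero]; exact le_max_right _ _
  | 1 =>
    refine le_trans ?_ (le_max_left _ _)
    refine ContinuousMultilinearMap.opNorm_le_bound (M := 1) zero_le_one fun m => ?_
    rw [iteratedFDeriv_one_apply]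
    have h : fderiv ℝ (fun y : E => y) x = ContinuousLinearMap.id ℝ E := fderiv_id'
    rw [h]
    simp [Fin.prod_univ_one]
  | (j+2) =>
    have h : iteratedFDeriv ℝ (j+2) (fun y : E => y) x = 0 := by
      ext m
      rw [iteratedFDeriv_succ_apply_right]
      have h2 : (fun y : E => fderiv ℝ (fun z : E => z) y)
          = fun _ : E => ContinuousLinearMap.id ℝ E := by
        funext y; exact fderiv_id'
      rw [h2, iteratedFDeriv_const_of_ne (by omega)]
      simp
    rw [h]
    simp

end Aux

section InnerAux

variable {E : Type*} [NormedAddCommGroup E] [InnerProductSpace ℝ E]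

/-- bound on iterated derivative of `‖x‖² - α²` on a ball -/
theorem norm_iteratedFDeriv_normSq_sub_le (α R : ℝ) (hR : 0 ≤ R) {x : E} (hx : ‖x‖ ≤ R)
    (i : ℕ) (hi : 1 ≤ i) :
    ‖iteratedFDeriv ℝ i (fun y : E => ‖y‖ ^ 2 - α ^ 2) x‖ ≤ (2 * (R + 1) ^ 2) ^ i := by
  have hq : ContDiff ℝ (i : WithTop ℕ∞) (fun y : E => (innerSL ℝ y) y) :=
    (contDiff_id.inner ℝ contDiff_id)
  have heq : iteratedFDeriv ℝ i (fun y : E => ‖y‖ ^ 2 - α ^ 2) x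
      = iteratedFDeriv ℝ i (fun y : E => (innerSL ℝ y) y) x := by
    have h1 : (fun y : E => ‖y‖ ^ 2 - α ^ 2)
        = (fun y : E => (innerSL ℝ y) y) + (fun _ : E => -α ^ 2) := by
      funext y
      simp only [Pi.add_apply, innerSL_apply_apply]
      rw [real_inner_self_eq_norm_sq]
      ring
    rw [h1, iteratedFDeriv_add_apply hq.contDiffAt contDiff_const.contDiffAt,
      iteratedFDeriv_const_of_ne (by omega)]
    simp
  rw [heq]
  have hbil := (innerSL ℝ (E := E)).norm_iteratedFDeriv_le_of_bilinear
    (f := fun y : E => y) (g := fun y : E => y) contDiff_id contDiff_id x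
    (le_refl (i : WithTop ℕ∞))
  refine hbil.trans ?_
  have hterm : ∀ j ∈ Finset.range (i + 1),
      (i.choose j : ℝ) * ‖iteratedFDeriv ℝ j (fun y : E => y) x‖ *
        ‖iteratedFDeriv ℝ (i - j) (fun y : E => y) x‖
      ≤ (i.choose j : ℝ) * (R + 1) * (R + 1) := by
    intro j _
    have hb : ∀ m : ℕ, ‖iteratedFDeriv ℝ m (fun y : E => y) x‖ ≤ R + 1 := by
      intro m
      refine (norm_iteratedFDeriv_id_le m x).trans ?_
      rw [max_le_iff]
      constructor <;> linarith
    have h0 : (0 : ℝ) ≤ i.choose j := by positivity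
    apply mul_le_mul _ (hb _) (norm_nonneg _) (by positivity)
    exact mul_le_mul_of_nonneg_left (hb _) h0 |>.trans_eq rfl
  have hsum : ∑ j ∈ Finset.range (i + 1),
      (i.choose j : ℝ) * ‖iteratedFDeriv ℝ j (fun y : E => y) x‖ *
        ‖iteratedFDeriv ℝ (i - j) (fun y : E => y) x‖
      ≤ 2 ^ i * ((R + 1) * (R + 1)) := by
    refine (Finset.sum_le_sum hterm).trans ?_
    have h2 : (∑ j ∈ Finset.range (i + 1), (i.choose j : ℝ)) = 2 ^ i := by
      exact_mod_cast Nat.sum_range_choose i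
    refine le_of_eq ?_
    have h3 : ∑ j ∈ Finset.range (i + 1), (i.choose j : ℝ) * (R + 1) * (R + 1)
        = ∑ j ∈ Finset.range (i + 1), ((R + 1) * (R + 1)) * (i.choose j : ℝ) :=
      Finset.sum_congr rfl fun j _ => by ring
    rw [h3, ← Finset.mul_sum, h2]
    ring
  calc ‖innerSL ℝ (E := E)‖ * ∑ j ∈ Finset.range (i + 1),
      (i.choose j : ℝ) * ‖iteratedFDeriv ℝ j (fun y : E => y) x‖ *
        ‖iteratedFDeriv ℝ (i - j) (fun y : E => y) x‖
      ≤ 1 * (2 ^ i * ((R + 1) * (R + 1))) := by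
        apply mul_le_mul (norm_innerSL_le ℝ) hsum (Finset.sum_nonneg ?_) zero_le_one
        intro j _
        positivity
    _ ≤ (2 * (R + 1) ^ 2) ^ i := by
        rw [one_mul, mul_pow]
        have h1 : (1:ℝ) ≤ R + 1 := by linarith
        have h2 : (R + 1) * (R + 1) = (R + 1) ^ 2 := by ring
        rw [h2]
        apply mul_le_mul_of_nonneg_left _ (by positivity)
        calc ((R+1))^2 = ((R+1)^2)^1 := by ring
          _ ≤ ((R + 1) ^ 2) ^ i := by
            apply pow_le_pow_right₀ (by nlinarith) hi

end InnerAux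

set_option maxHeartbeats 2000000 in
/-- **Distributions supported in a sphere are annihilated by a power of `|x|² - α²`.**
If a tempered distribution `S` on `ℝˡ` is supported in the sphere `{x : |x| = α}` (i.e.
`⟨S, φ⟩ = 0` whenever the support of the Schwartz function `φ` is disjoint from the sphere),
then there is `N ≥ 0` with `(|x|² - α²)^{N+1} · S = 0`, i.e. `⟨S, (|x|² - α²)^{N+1} φ⟩ = 0`
for every Schwartz function `φ`. -/
theorem annihilated_by_power_of_sphere_polynomial (l : ℕ) (α : ℝ) (hα : 0 < α)
    (S : 𝓢(EuclideanSpace ℝ (Fin l), ℂ) →L[ℂ] ℂ)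
    (hsupp : ∀ φ : 𝓢(EuclideanSpace ℝ (Fin l), ℂ),
      Disjoint (tsupport ⇑φ) {x : EuclideanSpace ℝ (Fin l) | ‖x‖ = α} → S φ = 0) :
    ∃ N : ℕ, ∀ φ ψ : 𝓢(EuclideanSpace ℝ (Fin l), ℂ),
      (∀ x : EuclideanSpace ℝ (Fin l),
        ψ x = ((‖x‖ ^ 2 - α ^ 2 : ℝ) : ℂ) ^ (N + 1) * φ x) →
      S ψ = 0 := by
  classical
  obtain ⟨s, C, hCne, hbound⟩ :=
    Seminorm.bound_of_continuous (schwartz_withSeminorms ℂ (EuclideanSpace ℝ (Fin l)) ℂ)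
      ((normSeminorm ℂ ℂ).comp (S : 𝓢(EuclideanSpace ℝ (Fin l), ℂ) →ₗ[ℂ] ℂ))
      (continuous_norm.comp S.continuous)
  set N : ℕ := s.sup Prod.snd with hNdef
  set k₀ : ℕ := s.sup Prod.fst with hk₀def
  refine ⟨N, fun φ ψ hψ => ?_⟩
  -- bound on derivatives of φ
  set Mφ : ℝ := ∑ i ∈ Finset.range (N + 1), SchwartzMap.seminorm ℂ 0 i φ with hMφdef
  have hMφ0 : 0 ≤ Mφ := Finset.sum_nonneg fun i _ => apply_nonneg _ _
  have hMφ : ∀ i, i ≤ N → ∀ x, ‖iteratedFDeriv ℝ i (⇑φ) x‖ ≤ Mφ := by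
    intro i hi x
    refine (SchwartzMap.norm_iteratedFDeriv_le_seminorm ℝ φ i x).trans ?_
    exact Finset.single_le_sum (fun j _ => apply_nonneg _ _) (Finset.mem_range.mpr (by omega))
  -- the bump function
  set b : ContDiffBump (0 : ℝ) := ⟨1, 2, one_pos, one_lt_two⟩ with hbdef
  have hrIn : b.rIn = 1 := rfl
  have hrOut : b.rOut = 2 := rfl
  set H : ℝ → ℂ := fun t => (t : ℂ) ^ (N + 1) * (b t : ℂ) with hHdef
  have hHsm : ContDiff ℝ ∞ H :=
    (Complex.ofRealCLM.contDiff.pow (N + 1)).mul (Complex.ofRealCLM.contDiff.comp b.contDiff)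
  have hHcs : HasCompactSupport H := by
    apply HasCompactSupport.intro (isCompact_closedBall (0 : ℝ) 2)
    intro t ht
    have h2 : b t = 0 := b.zero_of_le_dist (by
      rw [hrOut]
      simpa [mem_closedBall, not_le] using (le_of_lt (by
        simpa [mem_closedBall, not_le] using ht)))
    simp [hHdef, h2]
  -- uniform bounds on the derivatives of H
  have hHb : ∀ i : ℕ, ∃ c : ℝ, 0 ≤ c ∧ ∀ t, ‖iteratedDeriv i H t‖ ≤ c := by
    intro i
    have hco : Continuous (iteratedFDeriv ℝ i H) :=
      hHsm.continuous_iteratedFDeriv (mod_cast le_top)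
    obtain ⟨c, hc⟩ := hco.bounded_above_of_compact_support (hHcs.iteratedFDeriv (𝕜 := ℝ) i)
    refine ⟨max c 0, le_max_right _ _, fun t => ?_⟩
    rw [← norm_iteratedFDeriv_eq_norm_iteratedDeriv]
    exact (hc t).trans (le_max_left _ _)
  choose cH hcH0 hcH using hHb
  set M : ℝ := ∑ i ∈ Finset.range (N + 1), cH i with hMdef
  have hM0 : 0 ≤ M := Finset.sum_nonneg fun i _ => hcH0 i
  have hM : ∀ i, i ≤ N → ∀ t, ‖iteratedDeriv i H t‖ ≤ M := fun i hi t =>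
    (hcH i t).trans (Finset.single_le_sum (fun j _ => hcH0 j) (Finset.mem_range.mpr (by omega)))
  -- the polynomial
  set P : EuclideanSpace ℝ (Fin l) → ℝ := fun x => ‖x‖ ^ 2 - α ^ 2 with hPdef
  have hPsm : ContDiff ℝ ∞ P := (contDiff_norm_sq ℝ).sub contDiff_const
  set D : ℝ := 2 * (α + 3) ^ 2 with hDdef
  have hD0 : (0 : ℝ) ≤ D := by positivity
  set K₁ : ℝ := (N.factorial : ℝ) * M * (max 1 D) ^ N with hK₁def
  have hK₁0 : 0 ≤ K₁ := by
    apply mul_nonneg (mul_nonneg (by positivity) hM0) (by positivity)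
  set K₃ : ℝ := (α + 3) ^ k₀ * (2 ^ N * (Mφ * K₁)) with hK₃def
  have hK₃0 : 0 ≤ K₃ := by positivity
  have key : ∀ ε : ℝ, 0 < ε → ε ≤ 1 → ‖S ψ‖ ≤ (C : ℝ) * (K₃ * ε) := by
    intro ε hε hε1
    have hεne : (ε : ℂ) ≠ 0 := by exact_mod_cast hε.ne'
    set u : ℝ → ℂ := fun t => (t : ℂ) ^ (N + 1) * (b (t / ε) : ℂ) with hudef
    have husm : ContDiff ℝ ∞ u :=
      (Complex.ofRealCLM.contDiff.pow (N + 1)).mul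
        (Complex.ofRealCLM.contDiff.comp (b.contDiff.comp (contDiff_id.div_const ε)))
    set g : EuclideanSpace ℝ (Fin l) → ℂ := fun x => φ x * u (P x) with hgdef
    have hgsm : ContDiff ℝ ∞ g := φ.smooth'.mul (husm.comp hPsm)
    have hbz : ∀ t : ℝ, 2 * ε ≤ |t| → u t = 0 := by
      intro t ht
      have h2 : b (t / ε) = 0 := b.zero_of_le_dist (by
        rw [hrOut, Real.dist_eq, sub_zero, abs_div, abs_of_pos hε, le_div_iff₀ hε]
        linarith)
      simp [hudef, h2]
    have hgz : ∀ x, α + 2 < ‖x‖ → g x = 0 := by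
      intro x hx
      have hp1 : 4 * α + 4 ≤ P x := by
        simp only [hPdef]
        nlinarith [norm_nonneg x]
      have h2 : 2 * ε ≤ |P x| := by
        rw [abs_of_nonneg (by nlinarith)]
        nlinarith
      simp [hgdef, hbz _ h2]
    have hgcs : HasCompactSupport g := by
      apply HasCompactSupport.intro (isCompact_closedBall (0 : EuclideanSpace ℝ (Fin l)) (α + 2))
      intro x hx
      exact hgz x (by simpa [mem_closedBall, dist_zero_right, not_le] using hx)
    set gS : 𝓢(EuclideanSpace ℝ (Fin l), ℂ) := ofCompactSmooth g hgsm hgcs with hgSdef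
    -- S ψ = S gS
    have hSg : S ψ = S gS := by
      have hdisj : Disjoint (tsupport ⇑(ψ - gS)) {x : EuclideanSpace ℝ (Fin l) | ‖x‖ = α} := by
        rw [Set.disjoint_left]
        intro x hx hxα
        have hsub : tsupport ⇑(ψ - gS) ⊆ {y | ε ≤ |P y|} := by
          apply closure_minimal
          · intro y hy
            simp only [Function.mem_support, ne_eq] at hy
            by_contra hlt
            simp only [Set.mem_setOf_eq, not_le] at hlt
            apply hy
            have hb1 : b (P y / ε) = 1 := by
              apply b.one_of_mem_closedBall
              rw [mem_closedBall, hrIn, Real.dist_eq, sub_zero, abs_div, abs_of_pos hε,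
                div_le_one hε]
              linarith
            have hgy : gS y = ψ y := by
              simp only [hgSdef, ofCompactSmooth_apply, hgdef, hudef, hψ y]
              rw [hb1]
              simp only [hPdef]
              push_cast
              ring
            simp [SchwartzMap.sub_apply, hgy]
          · have hcl : IsClosed {y : EuclideanSpace ℝ (Fin l) | ε ≤ |P y|} :=
              IsClosed.preimage (continuous_abs.comp hPsm.continuous) isClosed_Ici
            exact hcl
        have h1 := hsub hx
        rw [Set.mem_setOf_eq] at h1 hxα
        have h2 : P x = 0 := by
          simp only [hPdef, hxα]
          ring
        rw [h2, abs_zero] at h1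
        linarith
      have h0 := hsupp (ψ - gS) hdisj
      rw [map_sub] at h0
      exact sub_eq_zero.mp h0
    -- derivative bounds for u
    have hueq : u = fun t => (ε ^ (N + 1) : ℝ) • H (ε⁻¹ * t) := by
      funext t
      have h1 : ((ε⁻¹ * t : ℝ) : ℂ) = (ε : ℂ)⁻¹ * (t : ℂ) := by push_cast; ring
      simp only [hudef, hHdef, Complex.real_smul, div_eq_inv_mul, h1]
      push_cast
      rw [← mul_assoc, ← mul_pow, ← mul_assoc, mul_inv_cancel₀ hεne, one_mul]
    have hu : ∀ m, m ≤ N → ∀ i, i ≤ m → ∀ t : ℝ,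
        ‖iteratedFDeriv ℝ i u t‖ ≤ M * ε ^ (N + 1 - m) := by
      intro m hm i him t
      have hvsm : ContDiff ℝ (i : ℕ∞) (fun t : ℝ => H (ε⁻¹ * t)) :=
        (hHsm.of_le (mod_cast le_top)).comp (contDiff_const.mul contDiff_id)
      rw [hueq, iteratedFDeriv_const_smul_apply' hvsm.contDiffAt]
      refine le_trans (ContinuousMultilinearMap.opNorm_smul_le _ _) ?_
      have h2 : ‖(ε ^ (N + 1) : ℝ)‖ = ε ^ (N + 1) := by
        rw [Real.norm_eq_abs, abs_pow, abs_of_pos hε]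
      rw [h2, norm_iteratedFDeriv_eq_norm_iteratedDeriv]
      have h3 := congrFun
        (iteratedDeriv_comp_const_smul (n := i) (hHsm.of_le (mod_cast le_top)) ε⁻¹) t
      rw [h3, norm_smul, Real.norm_eq_abs, abs_pow, abs_of_pos (inv_pos.mpr hε)]
      calc ε ^ (N + 1) * (ε⁻¹ ^ i * ‖iteratedDeriv i H (ε⁻¹ * t)‖)
          ≤ ε ^ (N + 1) * (ε⁻¹ ^ i * M) := by
            apply mul_le_mul_of_nonneg_left
              (mul_le_mul_of_nonneg_left (hM i (him.trans hm) _) (by positivity))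
              (by positivity)
        _ = M * (ε ^ (N + 1) / ε ^ i) := by rw [inv_pow]; ring
        _ = M * ε ^ (N + 1 - i) := by rw [pow_sub₀ ε hε.ne' (by omega), div_eq_mul_inv]
        _ ≤ M * ε ^ (N + 1 - m) := by
            apply mul_le_mul_of_nonneg_left _ hM0
            apply pow_le_pow_of_le_one hε.le hε1 (by omega)
    -- composition bound
    have hcomp : ∀ m, m ≤ N → ∀ x : EuclideanSpace ℝ (Fin l), ‖x‖ ≤ α + 2 →
        ‖iteratedFDeriv ℝ m (fun y => u (P y)) x‖ ≤ K₁ * ε := by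
      intro m hm x hx
      have hres := norm_iteratedFDeriv_comp_le (𝕜 := ℝ) (g := u) (f := P) (n := m) (N := ∞)
        husm hPsm (mod_cast le_top) x
        (C := M * ε ^ (N + 1 - m)) (D := D)
        (fun i hi => hu m hm i hi (P x))
        (fun i hi1 _ => by
          have hres2 := norm_iteratedFDeriv_normSq_sub_le α (α + 2) (by linarith) hx i hi1
          have he : (2 * (α + 2 + 1) ^ 2 : ℝ) = D := by rw [hDdef]; ring
          rw [he] at hres2
          rw [hPdef]
          exact hres2)
      rw [Function.comp_def] at hres
      refine hres.trans ?_
      have e1 : ε ^ (N + 1 - m) ≤ ε := by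
        have h5 := pow_le_pow_of_le_one hε.le hε1 (show 1 ≤ N + 1 - m by omega)
        simpa using h5
      have e2 : (m.factorial : ℝ) ≤ (N.factorial : ℝ) := by
        exact_mod_cast Nat.factorial_le hm
      have e3 : D ^ m ≤ (max 1 D) ^ N :=
        (pow_le_pow_left₀ hD0 (le_max_right 1 D) m).trans
          (pow_le_pow_right₀ (le_max_left 1 D) hm)
      calc (m.factorial : ℝ) * (M * ε ^ (N + 1 - m)) * D ^ m
          ≤ (N.factorial : ℝ) * (M * ε) * (max 1 D) ^ N := by
            apply mul_le_mul
              (mul_le_mul e2 (mul_le_mul_of_nonneg_left e1 hM0) (by positivity) (by positivity))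
              e3 (by positivity) (by positivity)
        _ = K₁ * ε := by rw [hK₁def]; ring
    -- seminorm-type bound for g
    have hgb : ∀ x : EuclideanSpace ℝ (Fin l), ∀ k j, k ≤ k₀ → j ≤ N →
        ‖x‖ ^ k * ‖iteratedFDeriv ℝ j g x‖ ≤ K₃ * ε := by
      intro x k j hk hj
      rcases le_or_gt ‖x‖ (α + 2) with hxR | hxR
      · have hmul := norm_iteratedFDeriv_mul_le (𝕜 := ℝ) (f := ⇑φ)
          (g := fun y => u (P y)) (N := ∞) φ.smooth' (husm.comp hPsm) x
          (n := j) (mod_cast le_top)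
        have hsum : ∑ i ∈ Finset.range (j + 1), (j.choose i : ℝ) *
            ‖iteratedFDeriv ℝ i (⇑φ) x‖ * ‖iteratedFDeriv ℝ (j - i) (fun y => u (P y)) x‖
            ≤ 2 ^ N * (Mφ * (K₁ * ε)) := by
          have hterm : ∀ i ∈ Finset.range (j + 1), (j.choose i : ℝ) *
              ‖iteratedFDeriv ℝ i (⇑φ) x‖ * ‖iteratedFDeriv ℝ (j - i) (fun y => u (P y)) x‖
              ≤ (j.choose i : ℝ) * (Mφ * (K₁ * ε)) := by
            intro i hi
            have hi' : i ≤ j := by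
              have := Finset.mem_range.mp hi; omega
            have t1 := hMφ i (hi'.trans hj) x
            have t2 := hcomp (j - i) (by omega) x hxR
            calc (j.choose i : ℝ) * ‖iteratedFDeriv ℝ i (⇑φ) x‖ *
                ‖iteratedFDeriv ℝ (j - i) (fun y => u (P y)) x‖
                ≤ (j.choose i : ℝ) * Mφ * (K₁ * ε) := by
                  apply mul_le_mul (mul_le_mul_of_nonneg_left t1 (by positivity)) t2
                    (norm_nonneg _) (by positivity)
              _ = (j.choose i : ℝ) * (Mφ * (K₁ * ε)) := by ring
          refine (Finset.sum_le_sum hterm).trans ?_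
          have h2 : (∑ i ∈ Finset.range (j + 1), (j.choose i : ℝ)) = 2 ^ j := by
            exact_mod_cast Nat.sum_range_choose j
          have h4 : (∑ i ∈ Finset.range (j + 1), (j.choose i : ℝ)) * (Mφ * (K₁ * ε))
              = ∑ i ∈ Finset.range (j + 1), (j.choose i : ℝ) * (Mφ * (K₁ * ε)) :=
            Finset.sum_mul _ _ _
          rw [← h4, h2]
          exact mul_le_mul_of_nonneg_right (pow_le_pow_right₀ one_le_two hj)
            (mul_nonneg hMφ0 (mul_nonneg hK₁0 hε.le))
        have hxk : ‖x‖ ^ k ≤ (α + 3) ^ k₀ :=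
          (pow_le_pow_left₀ (norm_nonneg x) (by linarith) k).trans
            (pow_le_pow_right₀ (by linarith) hk)
        calc ‖x‖ ^ k * ‖iteratedFDeriv ℝ j g x‖
            ≤ (α + 3) ^ k₀ * (2 ^ N * (Mφ * (K₁ * ε))) := by
              apply mul_le_mul hxk (hmul.trans hsum) (norm_nonneg _) (by positivity)
          _ = K₃ * ε := by rw [hK₃def]; ring
      · have hzero : iteratedFDeriv ℝ j g x = 0 := by
          apply myIteratedFDeriv_eq_zero
          have hopen : IsOpen {y : EuclideanSpace ℝ (Fin l) | α + 2 < ‖y‖} :=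
            isOpen_lt continuous_const continuous_norm
          filter_upwards [hopen.mem_nhds hxR] with y hy
          exact hgz y hy
        rw [hzero]
        simp only [norm_zero, mul_zero]
        positivity
    -- conclude the bound
    rw [hSg]
    have h1 := hbound gS
    have h3 : (s.sup (schwartzSeminormFamily ℂ (EuclideanSpace ℝ (Fin l)) ℂ)) gS ≤ K₃ * ε := by
      apply Seminorm.finset_sup_apply_le (by positivity)
      rintro ⟨k, j⟩ hij
      have hk : k ≤ k₀ := Finset.le_sup (f := Prod.fst) hij
      have hj : j ≤ N := Finset.le_sup (f := Prod.snd) hij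
      rw [schwartzSeminormFamily_apply]
      apply SchwartzMap.seminorm_le_bound ℂ k j gS (by positivity)
      intro x
      exact hgb x k j hk hj
    calc ‖S gS‖
        = ((normSeminorm ℂ ℂ).comp (S : 𝓢(EuclideanSpace ℝ (Fin l), ℂ) →ₗ[ℂ] ℂ)) gS := rfl
      _ ≤ (C • s.sup (schwartzSeminormFamily ℂ (EuclideanSpace ℝ (Fin l)) ℂ)) gS := h1
      _ = (C : ℝ) * (s.sup (schwartzSeminormFamily ℂ (EuclideanSpace ℝ (Fin l)) ℂ)) gS := rfl
      _ ≤ (C : ℝ) * (K₃ * ε) := mul_le_mul_of_nonneg_left h3 C.coe_nonneg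
  -- conclude
  by_contra hne
  have hpos : 0 < ‖S ψ‖ := norm_pos_iff.mpr hne
  set c : ℝ := (C : ℝ) * K₃ with hcdef
  have hc0 : 0 ≤ c := by positivity
  set ε : ℝ := min 1 (‖S ψ‖ / (2 * (c + 1))) with hεdef
  have hε : 0 < ε := lt_min one_pos (by positivity)
  have hε1 : ε ≤ 1 := min_le_left _ _
  have h1 := key ε hε hε1
  have h2 : ε ≤ ‖S ψ‖ / (2 * (c + 1)) := min_le_right _ _
  have hce : (C : ℝ) * (K₃ * ε) = c * ε := by rw [hcdef]; ring
  rw [hce] at h1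
  have h3 : c * ε ≤ (c + 1) * (‖S ψ‖ / (2 * (c + 1))) :=
    mul_le_mul (by linarith) h2 hε.le (by linarith)
  have h4 : (c + 1) * (‖S ψ‖ / (2 * (c + 1))) = ‖S ψ‖ / 2 := by
    field_simp
  nlinarith
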